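/- Existence of a minimal-reduction-respecting optimal policy: every single-decision SCIM has an optimal policy that depends only on its requisite observations, i.e. a policy that is constant in the values of all nonrequisite parents of the decision. -/

import Mathlib

attribute [local instance] Classical.propDecidable

noncomputable section

/-- Acyclicity of a directed graph. -/
def Acyclic {V : Type} (E : V → V → Prop) : Prop := ∀ v, ¬ Relation.TransGen E v v

/-- A walk in the digraph: a nonempty list of vertices where consecutive
vertices are joined by an edge in some direction. -/
def IsWalk {V : Type} (E : V → V → Prop) (p : List V) : Prop :=
  p ≠ [] ∧ p.Chain' (fun a b => E a b ∨ E b a)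

/-- A consecutive triple `a, b, c` blocks a path w.r.t. `S` if `b` is a collider
with no descendant (including itself) in `S`, or a non-collider in `S`. -/
def BlockedTriple {V : Type} (E : V → V → Prop) (S : Set V) (a b c : V) : Prop :=
  (E a b ∧ E c b ∧ ∀ w, Relation.ReflTransGen E b w → w ∉ S) ∨
  (¬ (E a b ∧ E c b) ∧ b ∈ S)

/-- A path is d-separated (blocked) by `S`. -/
def BlocksPath {V : Type} (E : V → V → Prop) (S : Set V) (p : List V) : Prop :=
  (∃ x, p.head? = some x ∧ x ∈ S) ∨ (∃ x, p.getLast? = some x ∧ x ∈ S) ∨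
  (∃ l a b c r, p = l ++ a :: b :: c :: r ∧ BlockedTriple E S a b c)

/-- `A` is d-separated from `B` given `S`. -/
def DSep {V : Type} (E : V → V → Prop) (A B S : Set V) : Prop :=
  ∀ p : List V, IsWalk E p → (∃ a ∈ A, p.head? = some a) →
    (∃ b ∈ B, p.getLast? = some b) → BlocksPath E S p

/-- An observation `X ∈ Pa_D` is requisite in the graph `E` with decision `D` and
utility nodes `U` if it is d-connected to the downstream utilities `U ∩ Desc(D)`
given the other observations and the decision, `(Pa_D ∪ {D}) \ {X}`. -/
def RequisiteG {V : Type} (E : V → V → Prop) (D : V) (U : Set V) (X : V) : Prop :=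
  E X D ∧ ¬ DSep E {X} {u | u ∈ U ∧ Relation.ReflTransGen E D u}
      {v | (E v D ∧ v ≠ X) ∨ v = D}

/-- The edge relation of the minimal reduction: all information links from
nonrequisite observations are removed. -/
def ReducedEdge {V : Type} (E : V → V → Prop) (D : V) (U : Set V) : V → V → Prop :=
  fun a b => E a b ∧ (b = D → RequisiteG E D U a)

variable {V : Type} [Fintype V] [DecidableEq V]

/-- A single-decision structural causal influence model (SCIM): a causal
influence diagram (DAG with a decision node `D` and childless utility nodes
`Util` whose values are interpreted in `ℝ` via `utilReal`), finite nonempty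
domains, structural functions for all non-decision nodes depending only on
parents, and mutually independent finitely-supported exogenous variables. -/
structure SCIM (V : Type) [Fintype V] [DecidableEq V] where
  Edge : V → V → Prop
  acyclic : Acyclic Edge
  D : V
  Util : Finset V
  utilNotD : D ∉ Util
  utilNoChild : ∀ u ∈ Util, ∀ v, ¬ Edge u v
  Dom : V → Type
  domFin : ∀ v, Fintype (Dom v)
  domNE : ∀ v, Nonempty (Dom v)
  utilReal : (u : V) → Dom u → ℝ
  ExoDom : V → Type
  exoFin : ∀ v, Fintype (ExoDom v)
  exoNE : ∀ v, Nonempty (ExoDom v)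
  f : (v : V) → ((p : V) → Dom p) → ExoDom v → Dom v
  localDep : ∀ v a a' e, (∀ p, Edge p v → a p = a' p) → f v a e = f v a' e
  P : (v : V) → ExoDom v → ℝ
  Pnonneg : ∀ v e, 0 ≤ P v e
  Psum : ∀ v, ∑ e ∈ (exoFin v).elems, P v e = 1

namespace SCIM

variable (M : SCIM V)

/-- Joint (product) probability of an exogenous setting. -/
def Pjoint (ε : ∀ v, M.ExoDom v) : ℝ := ∏ v, M.P v (ε v)

/-- All exogenous settings. -/
def exoElems : Finset (∀ v, M.ExoDom v) :=
  letI := M.exoFin; Finset.univ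

/-- A default assignment of values. -/
def dflt : ∀ v, M.Dom v := fun v => (M.domNE v).some

/-- `a` solves the system of structural equations `g` at exogenous setting `ε`. -/
def Solves (g : (v : V) → ((p : V) → M.Dom p) → M.ExoDom v → M.Dom v)
    (ε : ∀ v, M.ExoDom v) (a : ∀ v, M.Dom v) : Prop :=
  ∀ v, a v = g v a (ε v)

/-- The (unique, by acyclicity) solution of the structural equations `g`
at `ε`: the values of all endogenous variables obtained by recursive
application of the structural functions. -/
def sol (g : (v : V) → ((p : V) → M.Dom p) → M.ExoDom v → M.Dom v)
    (ε : ∀ v, M.ExoDom v) : ∀ v, M.Dom v :=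
  if h : ∃ a, M.Solves g ε a then h.choose else M.dflt

/-- Replace the structural function at node `X` by `gX` (a soft intervention). -/
def replaceAt (g : (v : V) → ((p : V) → M.Dom p) → M.ExoDom v → M.Dom v) (X : V)
    (gX : ((p : V) → M.Dom p) → M.ExoDom X → M.Dom X) :
    (v : V) → ((p : V) → M.Dom p) → M.ExoDom v → M.Dom v :=
  fun v => if h : v = X then (by subst h; exact gX) else g v

/-- Hard intervention do(`X` = `x`): constant functions on `X`. -/
def doSet (g : (v : V) → ((p : V) → M.Dom p) → M.ExoDom v → M.Dom v)
    (X : Set V) (x : ∀ v, M.Dom v) :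
    (v : V) → ((p : V) → M.Dom p) → M.ExoDom v → M.Dom v :=
  fun v => if v ∈ X then fun _ _ => x v else g v

/-- A policy: a structural function for `D` that depends only on the
observations `Pa_D` (and the exogenous variable of `D`). -/
def IsPolicy (π : ((p : V) → M.Dom p) → M.ExoDom M.D → M.Dom M.D) : Prop :=
  ∀ a a' e, (∀ p, M.Edge p M.D → a p = a' p) → π a e = π a' e

/-- The policy-completed system of structural functions. -/
def gpol (π : ((p : V) → M.Dom p) → M.ExoDom M.D → M.Dom M.D) :
    (v : V) → ((p : V) → M.Dom p) → M.ExoDom v → M.Dom v :=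
  M.replaceAt M.f M.D π

/-- Total utility of an assignment: the sum of the utility-node values. -/
def TotalU (a : ∀ v, M.Dom v) : ℝ := ∑ u ∈ M.Util, M.utilReal u (a u)

/-- Expected total utility of a system of structural equations `g`. -/
def EUg (g : (v : V) → ((p : V) → M.Dom p) → M.ExoDom v → M.Dom v) : ℝ :=
  ∑ ε ∈ M.exoElems, M.Pjoint ε * M.TotalU (M.sol g ε)

/-- Expected total utility of a policy. -/
def EU (π : ((p : V) → M.Dom p) → M.ExoDom M.D → M.Dom M.D) : ℝ :=
  M.EUg (M.gpol π)

/-- An optimal policy maximizes expected total utility. -/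
def IsOptimal (π : ((p : V) → M.Dom p) → M.ExoDom M.D → M.Dom M.D) : Prop :=
  M.IsPolicy π ∧ ∀ π', M.IsPolicy π' → M.EU π' ≤ M.EU π

/-- Probability of an event over exogenous settings. -/
def PrEv (Ev : (∀ v, M.ExoDom v) → Prop) : ℝ :=
  ∑ ε ∈ M.exoElems, if Ev ε then M.Pjoint ε else 0

/-- Conditional expectation of `h` given the event `Ev`. -/
def condExp (h : (∀ v, M.ExoDom v) → ℝ) (Ev : (∀ v, M.ExoDom v) → Prop) : ℝ :=
  (∑ ε ∈ M.exoElems, if Ev ε then M.Pjoint ε * h ε else 0) / M.PrEv Ev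

/-- Conditional probability of `h` given `Ev`. -/
def condProb (h Ev : (∀ v, M.ExoDom v) → Prop) : ℝ :=
  M.PrEv (fun ε => h ε ∧ Ev ε) / M.PrEv Ev

/-- The event that the decision context (the observations `Pa_D`) takes the
values `pa`, under policy `π`. -/
def CtxEvent (π : ((p : V) → M.Dom p) → M.ExoDom M.D → M.Dom M.D)
    (pa : ∀ v, M.Dom v) (ε : ∀ v, M.ExoDom v) : Prop :=
  ∀ p, M.Edge p M.D → M.sol (M.gpol π) ε p = pa p

/-- The potential response under the hard intervention do(`X` = `x`),
in the policy-completed model: an assignment to all variables. -/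
def response (π : ((p : V) → M.Dom p) → M.ExoDom M.D → M.Dom M.D)
    (X : V) (x : M.Dom X) (ε : ∀ v, M.ExoDom v) : ∀ v, M.Dom v :=
  M.sol (M.doSet (M.gpol π) {X} (Function.update M.dflt X x)) ε

/-- The nested-counterfactual assignment realizing `U_{X_d}`: intervene on `X`
with the value `X_d(ε)` it would take under do(`D` = `d`). -/
def nestedSol (π : ((p : V) → M.Dom p) → M.ExoDom M.D → M.Dom M.D)
    (X : V) (d : M.Dom M.D) (ε : ∀ v, M.ExoDom v) : ∀ v, M.Dom v :=
  M.response π X (M.response π M.D d ε X) ε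

/-- Instrumental control incentive on `X`: in some decision context `pa`
(of positive probability), every optimal policy has
`E[U_{X_d} | pa] ≠ E[U | pa]` for some `d`. -/
def HasICI (X : V) : Prop :=
  ∃ pa : ∀ v, M.Dom v, ∀ π, M.IsOptimal π →
    0 < M.PrEv (M.CtxEvent π pa) ∧
    ∃ d : M.Dom M.D,
      M.condExp (fun ε => M.TotalU (M.nestedSol π X d ε)) (M.CtxEvent π pa) ≠
      M.condExp (fun ε => M.TotalU (M.sol (M.gpol π) ε)) (M.CtxEvent π pa)

/-- A policy that does not use the information link `X → D`. -/
def IsPolicyWithout (X : V)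
    (π : ((p : V) → M.Dom p) → M.ExoDom M.D → M.Dom M.D) : Prop :=
  M.IsPolicy π ∧ ∀ a a' e, (∀ p, M.Edge p M.D → p ≠ X → a p = a' p) → π a e = π a' e

/-- Counterfactual fairness of policy `π` w.r.t. sensitive attribute `A`:
`Pr(D_{a'} = d | pa_D, a) = Pr(D = d | pa_D, a)` for all `d`, contexts `pa_D`,
and attribute values `a, a'` with positive probability of the conditioning event. -/
def CFair (π : ((p : V) → M.Dom p) → M.ExoDom M.D → M.Dom M.D) (A : V) : Prop :=
  ∀ (d : M.Dom M.D) (pa : ∀ v, M.Dom v) (a a' : M.Dom A),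
    0 < M.PrEv (fun ε => M.CtxEvent π pa ε ∧ M.sol (M.gpol π) ε A = a) →
    M.condProb (fun ε => M.response π A a' ε M.D = d)
        (fun ε => M.CtxEvent π pa ε ∧ M.sol (M.gpol π) ε A = a) =
    M.condProb (fun ε => M.sol (M.gpol π) ε M.D = d)
        (fun ε => M.CtxEvent π pa ε ∧ M.sol (M.gpol π) ε A = a)

end SCIM

section Basic

open Relation

variable {V : Type} [Fintype V] [DecidableEq V] (M : SCIM V)

/-- A system of structural functions that depends only on parents. -/
def Loc (g : (v : V) → ((p : V) → M.Dom p) → M.ExoDom v → M.Dom v) : Prop :=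
  ∀ v a a' e, (∀ p, M.Edge p v → a p = a' p) → g v a e = g v a' e

lemma wfE : WellFounded M.Edge := by
  have h1 : IsTrans V (Relation.TransGen M.Edge) := ⟨fun a b c => Relation.TransGen.trans⟩
  have h2 : IsIrrefl V (Relation.TransGen M.Edge) := ⟨M.acyclic⟩
  exact Subrelation.wf (fun {x y} h => Relation.TransGen.single h)
    (Finite.wellFounded_of_trans_of_irrefl (Relation.TransGen M.Edge))

lemma exists_solves (g) (hg : Loc M g) (ε : ∀ v, M.ExoDom v) : ∃ a, M.Solves g ε a := by
  classical
  let F : ∀ v, (∀ p, M.Edge p v → M.Dom p) → M.Dom v :=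
    fun v rec => g v (fun p => if h : M.Edge p v then rec p h else M.dflt p) (ε v)
  let a : ∀ v, M.Dom v := (wfE M).fix F
  refine ⟨a, fun v => ?_⟩
  have hfix : a v = F v (fun y _ => a y) := (wfE M).fix_eq F v
  rw [hfix]
  exact hg v _ a (ε v) (fun p hp => by simp [F, hp])

lemma solves_unique {g} (hg : Loc M g) {ε a b} (ha : M.Solves g ε a) (hb : M.Solves g ε b) :
    a = b := by
  funext v
  induction v using (wfE M).induction with
  | _ v ih => rw [ha v, hb v]; exact hg v a b (ε v) (fun p hp => ih p hp)

lemma sol_solves (g) (hg : Loc M g) (ε) : M.Solves g ε (M.sol g ε) := by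
  have h := exists_solves M g hg ε
  unfold SCIM.sol
  rw [dif_pos h]
  exact h.choose_spec

lemma sol_eq_of_solves {g} (hg : Loc M g) {ε a} (ha : M.Solves g ε a) : M.sol g ε = a :=
  solves_unique M hg (sol_solves M g hg ε) ha

/-- edges avoiding a clamped set `C` -/
def FC (C : Set V) (a b : V) : Prop := M.Edge a b ∧ a ∉ C ∧ b ∉ C

/-- Master locality lemma: the solution at `u` depends only on the data along
unclamped ancestors of `u`, given that clamped nodes relevant to `u` are clamped
to equal constants in both systems. -/
lemma sol_congr (C : Set V) (g g') (hg : Loc M g) (hg' : Loc M g')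
    (hsame : ∀ v, v ∉ C → g v = g' v)
    (u : V)
    (hCconst : ∀ c, c ∈ C → ∀ v, M.Edge c v → v ∉ C → ReflTransGen (FC M C) v u →
      ∃ x : M.Dom c, (∀ a e, g c a e = x) ∧ (∀ a e, g' c a e = x))
    (ε ε' : ∀ v, M.ExoDom v)
    (hε : ∀ v, v ∉ C → ReflTransGen (FC M C) v u → ε v = ε' v)
    (hu : u ∉ C) :
    M.sol g ε u = M.sol g' ε' u := by
  suffices h : ∀ v, v ∉ C → ReflTransGen (FC M C) v u → M.sol g ε v = M.sol g' ε' v from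
    h u hu ReflTransGen.refl
  intro v
  induction v using (wfE M).induction with
  | _ v ih =>
    intro hvC hvu
    rw [sol_solves M g hg ε v, sol_solves M g' hg' ε' v, ← hsame v hvC, ← hε v hvC hvu]
    refine hg v _ _ (ε v) (fun p hp => ?_)
    by_cases hpC : p ∈ C
    · obtain ⟨x, hx1, hx2⟩ := hCconst p hpC v hp hvC hvu
      rw [sol_solves M g hg ε p, sol_solves M g' hg' ε' p, hx1, hx2]
    · exact ih p hp hpC (ReflTransGen.head ⟨hp, hpC, hvC⟩ hvu)

end Basic

section Prob

variable {V : Type} [Fintype V] [DecidableEq V] (M : SCIM V)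

lemma exoElems_eq : M.exoElems = (letI := M.exoFin; (Finset.univ : Finset (∀ v, M.ExoDom v))) := rfl

lemma Pjoint_nonneg (ε) : 0 ≤ M.Pjoint ε :=
  Finset.prod_nonneg (fun v _ => M.Pnonneg v (ε v))

lemma sum_Pjoint : (∑ ε ∈ M.exoElems, M.Pjoint ε) = 1 := by
  letI := M.exoFin
  have h : (∑ ε ∈ M.exoElems, M.Pjoint ε) = ∑ ε : (∀ v, M.ExoDom v), ∏ v, M.P v (ε v) := rfl
  rw [h, ← Fintype.prod_sum (fun v e => M.P v e)]
  have h2 : ∀ v : V, (∑ e, M.P v e) = 1 := by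
    intro v
    have := M.Psum v
    convert this using 2
    rfl
  rw [Finset.prod_congr rfl (fun v _ => h2 v), Finset.prod_const_one]

lemma split (q : V → Prop) (f g : (∀ v, M.ExoDom v) → ℝ)
    (hf : ∀ ε ε', (∀ v, q v → ε v = ε' v) → f ε = f ε')
    (hg : ∀ ε ε', (∀ v, ¬ q v → ε v = ε' v) → g ε = g ε') :
    (∑ ε ∈ M.exoElems, M.Pjoint ε * (f ε * g ε)) =
      (∑ ε ∈ M.exoElems, M.Pjoint ε * f ε) * (∑ ε ∈ M.exoElems, M.Pjoint ε * g ε) := by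
  classical
  letI := M.exoFin
  let s : ((∀ v, M.ExoDom v) × (∀ v, M.ExoDom v)) → ((∀ v, M.ExoDom v) × (∀ v, M.ExoDom v)) :=
    fun x => (fun v => if q v then x.1 v else x.2 v, fun v => if q v then x.2 v else x.1 v)
  have hinv : Function.Involutive s := by
    intro x
    refine Prod.ext (funext fun v => ?_) (funext fun v => ?_) <;> by_cases h : q v <;> simp [s, h]
  have key : (∑ x : (∀ v, M.ExoDom v) × (∀ v, M.ExoDom v),
        (M.Pjoint x.1 * f x.1) * (M.Pjoint x.2 * g x.2)) =
      ∑ x : (∀ v, M.ExoDom v) × (∀ v, M.ExoDom v),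
        (M.Pjoint x.1 * M.Pjoint x.2) * (f x.1 * g x.1) := by
    rw [← hinv.bijective.sum_comp
      (fun x : (∀ v, M.ExoDom v) × (∀ v, M.ExoDom v) =>
        (M.Pjoint x.1 * f x.1) * (M.Pjoint x.2 * g x.2))]
    refine Finset.sum_congr rfl (fun x _ => ?_)
    have h1 : f (s x).1 = f x.1 := hf _ _ (fun v hv => by simp [s, hv])
    have h2 : g (s x).2 = g x.1 := hg _ _ (fun v hv => by simp [s, hv])
    have h3 : M.Pjoint (s x).1 * M.Pjoint (s x).2 = M.Pjoint x.1 * M.Pjoint x.2 := by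
      unfold SCIM.Pjoint
      rw [← Finset.prod_mul_distrib, ← Finset.prod_mul_distrib]
      refine Finset.prod_congr rfl (fun v _ => ?_)
      by_cases h : q v <;> simp [s, h, mul_comm]
    calc (M.Pjoint (s x).1 * f (s x).1) * (M.Pjoint (s x).2 * g (s x).2)
        = (M.Pjoint (s x).1 * M.Pjoint (s x).2) * (f (s x).1 * g (s x).2) := by ring
      _ = (M.Pjoint x.1 * M.Pjoint x.2) * (f x.1 * g x.1) := by rw [h1, h2, h3]
  have lhs1 : (∑ x : (∀ v, M.ExoDom v) × (∀ v, M.ExoDom v),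
        (M.Pjoint x.1 * f x.1) * (M.Pjoint x.2 * g x.2)) =
      (∑ ε ∈ M.exoElems, M.Pjoint ε * f ε) * (∑ ε ∈ M.exoElems, M.Pjoint ε * g ε) := by
    rw [Fintype.sum_prod_type, exoElems_eq, Finset.sum_mul_sum]
  have rhs1 : (∑ x : (∀ v, M.ExoDom v) × (∀ v, M.ExoDom v),
        (M.Pjoint x.1 * M.Pjoint x.2) * (f x.1 * g x.1)) =
      (∑ ε ∈ M.exoElems, M.Pjoint ε * (f ε * g ε)) * (∑ ε ∈ M.exoElems, M.Pjoint ε) := by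
    rw [Fintype.sum_prod_type, exoElems_eq, Finset.sum_mul_sum]
    exact Finset.sum_congr rfl fun i _ => Finset.sum_congr rfl fun j _ => by ring
  rw [← lhs1, key, rhs1, sum_Pjoint, mul_one]

end Prob

section Graph

open Relation List

variable {V : Type} [Fintype V] [DecidableEq V] (M : SCIM V)

/-- downstream utility nodes -/
def Uset : Set V := {u | u ∈ (↑M.Util : Set V) ∧ ReflTransGen M.Edge M.D u}

/-- requisite observations -/
def Rset : Set V := {v | RequisiteG M.Edge M.D (↑M.Util) v}

/-- nonrequisite observations -/
def Nset : Set V := {v | M.Edge v M.D ∧ v ∉ Rset M}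

/-- the clamped node set -/
def Cset : Set V := Rset M ∪ {M.D}

/-- edges avoiding `D` -/
def E0 (a b : V) : Prop := M.Edge a b ∧ a ≠ M.D ∧ b ≠ M.D

/-- relevant ancestral set -/
def An : Set V := {v | ∃ t, (t ∈ Nset M ∪ Uset M ∪ Rset M) ∧ ReflTransGen (E0 M) v t}

/-- an "active triple" for both kinds of conditioning sets used below -/
def ATri (a b c : V) : Prop :=
  ((M.Edge a b ∧ M.Edge c b) → ∃ w, ReflTransGen M.Edge b w ∧ w ∈ Rset M) ∧
  (¬ (M.Edge a b ∧ M.Edge c b) → (b ∉ Rset M ∧ b ≠ M.D))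

/-- all consecutive triples are active -/
def TriChain : List V → Prop
  | (a :: b :: c :: l) => ATri M a b c ∧ TriChain (b :: c :: l)
  | _ => True

def Wrel (a b : V) : Prop := M.Edge a b ∨ M.Edge b a

def BadWalk (p : List V) : Prop :=
  (∃ Y ∈ Nset M, p.head? = some Y) ∧ (∃ u ∈ Uset M, p.getLast? = some u) ∧
  p ≠ [] ∧ p.Chain' (Wrel M) ∧ TriChain M p

def BAD : Prop := ∃ p, BadWalk M p

def GoodWalk (v : V) (p : List V) : Prop :=
  p.head? = some v ∧ (∃ u ∈ Uset M, p.getLast? = some u) ∧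
  p.Chain' (Wrel M) ∧ TriChain M p ∧
  (p = [v] ∨ ∃ w rest, p = v :: w :: rest ∧
     (M.Edge v w ∨ (M.Edge w v ∧ ∃ z, ReflTransGen M.Edge v z ∧ z ∈ Rset M)))

def GOOD (v : V) : Prop := ∃ p, GoodWalk M v p

inductive InB : V → Prop
  | base : ∀ u, u ∈ Uset M → InB u
  | up : ∀ v p, InB v → M.Edge p v → p ∉ Rset M → p ≠ M.D → InB p
  | down : ∀ v c, InB v → M.Edge v c → c ∉ Rset M → c ≠ M.D → c ∈ An M → InB c
  | moral : ∀ p r q, InB p → M.Edge p r → r ∈ Rset M → M.Edge q r → q ∉ Rset M → q ≠ M.D →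
      InB q

lemma noself {a : V} : ¬ M.Edge a a := fun h => M.acyclic a (TransGen.single h)

lemma no2cycle {a b : V} (h : M.Edge a b) : ¬ M.Edge b a :=
  fun h' => M.acyclic a (TransGen.head h (TransGen.single h'))

lemma U_noR {u : V} (hu : u ∈ Uset M) : u ∉ Rset M :=
  fun hr => M.utilNoChild u hu.1 M.D hr.1

lemma U_neD {u : V} (hu : u ∈ Uset M) : u ≠ M.D := fun h => M.utilNotD (h ▸ hu.1)

lemma D_notR : M.D ∉ Rset M := fun hr => noself M hr.1

lemma InB_ne {v : V} (h : InB M v) : v ∉ Rset M ∧ v ≠ M.D := by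
  induction h with
  | base u hu => exact ⟨U_noR M hu, U_neD M hu⟩
  | up v p _ _ h1 h2 => exact ⟨h1, h2⟩
  | down v c _ _ h1 h2 _ => exact ⟨h1, h2⟩
  | moral p r q _ _ _ _ h1 h2 => exact ⟨h1, h2⟩

lemma TriChain_tail {x : V} {l : List V} (h : TriChain M (x :: l)) : TriChain M l := by
  match l with
  | [] => trivial
  | [a] => trivial
  | [a, b] => trivial
  | (a :: b :: c :: r) => exact h.2

lemma TriChain_suffix {r : List V} : ∀ (l : List V), TriChain M (l ++ r) → TriChain M r := by
  intro l
  induction l with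
  | nil => exact id
  | cons x l ih => intro h; exact ih (TriChain_tail M h)

lemma TriChain_decomp {p : List V} (h : TriChain M p) {l r : List V} {a b c : V}
    (heq : p = l ++ a :: b :: c :: r) : ATri M a b c := by
  subst heq
  have := TriChain_suffix M l h
  exact this.1

lemma TriChain_cons {a b : V} {l : List V} (h : TriChain M (b :: l))
    (h2 : ∀ c r, l = c :: r → ATri M a b c) : TriChain M (a :: b :: l) := by
  match l with
  | [] => trivial
  | (c :: r) => exact ⟨h2 c r rfl, h⟩

/-- prepend a vertex to a walk -/
lemma walk_cons {v x : V} {p : List V} (hp : p.head? = some v)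
    (hw : p.Chain' (Wrel M)) (ht : TriChain M p) (hedge : Wrel M x v)
    (htri : ∀ w rest, p = v :: w :: rest → ATri M x v w) :
    (x :: p).Chain' (Wrel M) ∧ TriChain M (x :: p) ∧
      (x :: p).getLast? = p.getLast? := by
  obtain ⟨l', rfl⟩ : ∃ l', p = v :: l' := by
    cases p with
    | nil => simp at hp
    | cons a l => simp only [List.head?_cons, Option.some.injEq] at hp; exact ⟨l, by rw [hp]⟩
  refine ⟨List.isChain_cons.2 ⟨fun y hy => ?_, hw⟩, ?_, ?_⟩
  · simp only [List.head?_cons, Option.mem_def, Option.some.injEq] at hy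
    exact hy ▸ hedge
  · exact TriChain_cons M ht (fun c r hcr => htri c r (by rw [hcr]))
  · exact List.getLast?_cons_cons

/-- directed paths avoiding `R` are active walks -/
lemma chain_tri : ∀ (q : List V), q.Chain' (E0 M) → (∀ x ∈ q, x ∉ Rset M) →
    q.Chain' (Wrel M) ∧ TriChain M q := by
  intro q
  induction q with
  | nil => intro _ _; exact ⟨List.isChain_nil, trivial⟩
  | cons a l ih =>
    intro hch hR
    have hl := ih (hch.tail) (fun x hx => hR x (List.mem_cons_of_mem a hx))
    refine ⟨List.isChain_cons.2 ⟨fun y hy => Or.inl (hch.rel_head? hy).1, hl.1⟩, ?_⟩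
    cases l with
    | nil => trivial
    | cons b l' =>
      refine TriChain_cons M hl.2 (fun c r hcr => ?_)
      have hab : E0 M a b := hch.rel_head
      subst hcr
      have hbc : E0 M b c := (hch.tail).rel_head
      constructor
      · intro hcol
        exact absurd hcol.2 (no2cycle M hbc.1)
      · intro _
        exact ⟨hR b (by simp), hab.2.2⟩

omit [Fintype V] [DecidableEq V] in
lemma head_shape {p : List V} {v : V} (hp : p.head? = some v) : ∃ l', p = v :: l' := by
  cases p with
  | nil => simp at hp
  | cons a l => simp only [List.head?_cons, Option.some.injEq] at hp; exact ⟨l, by rw [hp]⟩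

lemma reach_cases {c t : V} (h : ReflTransGen (E0 M) c t) (ht : t ∉ Rset M) :
    (∃ w ∈ Rset M, ReflTransGen M.Edge c w) ∨
      ∃ q : List V, (c :: q).Chain' (E0 M) ∧ (c :: q).getLast? = some t ∧
        ∀ x ∈ c :: q, x ∉ Rset M := by
  induction h using Relation.ReflTransGen.head_induction_on with
  | refl => exact Or.inr ⟨[], List.isChain_singleton _, rfl, by simpa using ht⟩
  | head e h' ih =>
    rename_i a b
    by_cases ha : a ∈ Rset M
    · exact Or.inl ⟨a, ha, ReflTransGen.refl⟩
    · rcases ih with ⟨w, hw, hr⟩ | ⟨q, hch, hlast, hqR⟩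
      · exact Or.inl ⟨w, hw, hr.head e.1⟩
      · refine Or.inr ⟨b :: q, List.isChain_cons_cons.2 ⟨e, hch⟩, ?_, ?_⟩
        · rw [List.getLast?_cons_cons]; exact hlast
        · intro x hx
          rcases List.mem_cons.1 hx with rfl | hx'
          · exact ha
          · exact hqR x hx'

lemma buildRev : ∀ (q : List V) (c : V) (W : List V),
    (c :: q).Chain' (E0 M) → (∀ x ∈ c :: q, x ∉ Rset M) →
    TriChain M (c :: W) → (c :: W).Chain' (Wrel M) →
    TriChain M ((c :: q).reverse ++ W) ∧ ((c :: q).reverse ++ W).Chain' (Wrel M) ∧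
      ((c :: q).reverse ++ W).head? = (c :: q).getLast? ∧
      ((c :: q).reverse ++ W).getLast? = (c :: W).getLast? := by
  intro q
  induction q with
  | nil =>
    intro c W _ _ h1 h2
    simp only [List.reverse_singleton, List.singleton_append]
    refine ⟨h1, h2, ?_, ?_⟩
    · simp
    · trivial
  | cons d q' ih =>
    intro c W hch hR h1 h2
    have hcd : E0 M c d := hch.rel_head
    have h1' : TriChain M (d :: c :: W) := by
      refine TriChain_cons M h1 (fun w r hwr => ?_)
      constructor
      · intro hcol; exact absurd hcol.1 (no2cycle M hcd.1)
      · intro _; exact ⟨hR c (by simp), hcd.2.1⟩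
    have h2' : (d :: c :: W).Chain' (Wrel M) := List.isChain_cons_cons.2 ⟨Or.inr hcd.1, h2⟩
    have hmain := ih d (c :: W) hch.tail (fun x hx => hR x (List.mem_cons_of_mem c hx)) h1' h2'
    have heq : (d :: q').reverse ++ (c :: W) = (c :: d :: q').reverse ++ W := by
      simp [List.reverse_cons, List.append_assoc]
    rw [heq] at hmain
    refine ⟨hmain.1, hmain.2.1, ?_, ?_⟩
    · rw [List.getLast?_cons_cons]; exact hmain.2.2.1
    · rw [hmain.2.2.2]; exact List.getLast?_cons_cons

lemma InB_good (hnb : ¬ BAD M) : ∀ v, InB M v → GOOD M v := by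
  intro v hv
  induction hv with
  | base u hu =>
    exact ⟨[u], rfl, ⟨u, hu, rfl⟩, List.isChain_singleton _,
      (trivial : True), Or.inl rfl⟩
  | up v p hv he hpR hpD ih =>
    obtain ⟨W, hhead, hlast, hw, ht, hfront⟩ := ih
    have htri : ∀ w rest, W = v :: w :: rest → ATri M p v w := by
      intro w rest hWeq
      rcases hfront with h1 | ⟨w', rest', heq2, hdisj⟩
      · rw [h1] at hWeq; simp at hWeq
      · rw [heq2] at hWeq
        simp only [List.cons.injEq, true_and] at hWeq
        obtain ⟨hw', -⟩ := hWeq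
        subst hw'
        rcases hdisj with hvw | ⟨hwv, z, hz⟩
        · exact ⟨fun hcol => absurd hcol.2 (no2cycle M hvw), fun _ => InB_ne M hv⟩
        · exact ⟨fun _ => ⟨z, hz⟩, fun hnc => absurd ⟨he, hwv⟩ hnc⟩
    have hc := walk_cons M hhead hw ht (Or.inl he) htri
    obtain ⟨l', rfl⟩ := head_shape hhead
    obtain ⟨u, hu, hl⟩ := hlast
    exact ⟨p :: v :: l', rfl, ⟨u, hu, by rw [hc.2.2]; exact hl⟩, hc.1, hc.2.1,
      Or.inr ⟨v, l', rfl, Or.inl he⟩⟩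
  | down v c hv he hcR hcD hcAn ih =>
    obtain ⟨W, hhead, hlast, hw, ht, hfront⟩ := ih
    have htri : ∀ w rest, W = v :: w :: rest → ATri M c v w := by
      intro w rest hWeq
      exact ⟨fun hcol => absurd hcol.1 (no2cycle M he), fun _ => InB_ne M hv⟩
    have hc := walk_cons M hhead hw ht (Or.inr he) htri
    by_cases hanc : ∃ w ∈ Rset M, ReflTransGen M.Edge c w
    · obtain ⟨z, hzR, hzr⟩ := hanc
      obtain ⟨l', rfl⟩ := head_shape hhead
      obtain ⟨u, hu, hl⟩ := hlast
      exact ⟨c :: v :: l', rfl, ⟨u, hu, by rw [hc.2.2]; exact hl⟩, hc.1, hc.2.1,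
        Or.inr ⟨v, l', rfl, Or.inr ⟨he, z, hzr, hzR⟩⟩⟩
    · obtain ⟨t, htmem, hreach⟩ := hcAn
      rcases htmem with (htN | htU) | htR
      · -- t ∈ N : produce a BAD walk, contradiction
        have htR' : t ∉ Rset M := htN.2
        rcases reach_cases M hreach htR' with ⟨w, hw', hr⟩ | ⟨q, hch, hlastq, hqR⟩
        · exact absurd ⟨w, hw', hr⟩ hanc
        · exfalso
          have hrev := buildRev M q c W hch hqR hc.2.1 hc.1
          refine hnb ⟨(c :: q).reverse ++ W, ⟨t, htN, ?_⟩, ?_, ?_, hrev.2.1, hrev.1⟩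
          · rw [hrev.2.2.1]; exact hlastq
          · obtain ⟨u, hu, hl⟩ := hlast
            obtain ⟨l', rfl⟩ := head_shape hhead
            refine ⟨u, hu, ?_⟩
            rw [hrev.2.2.2, List.getLast?_cons_cons]
            exact hl
          · simp
      · -- t ∈ U : reroute down to a utility
        have htR' : t ∉ Rset M := U_noR M htU
        rcases reach_cases M hreach htR' with ⟨w, hw', hr⟩ | ⟨q, hch, hlastq, hqR⟩
        · exact absurd ⟨w, hw', hr⟩ hanc
        · have hqw := chain_tri M (c :: q) hch hqR
          refine ⟨c :: q, rfl, ⟨t, htU, hlastq⟩, hqw.1, hqw.2, ?_⟩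
          cases q with
          | nil => exact Or.inl rfl
          | cons d q' => exact Or.inr ⟨d, q', rfl, Or.inl hch.rel_head.1⟩
      · exact absurd ⟨t, htR, ReflTransGen.mono (r := E0 M) (p := M.Edge) (fun a b h => h.1) _ _ hreach⟩ hanc
  | moral p r q hp he1 hrR he2 hqR hqD ih =>
    obtain ⟨W, hhead, hlast, hw, ht, hfront⟩ := ih
    have htri1 : ∀ w rest, W = p :: w :: rest → ATri M r p w :=
      fun w rest _ => ⟨fun hcol => absurd hcol.1 (no2cycle M he1), fun _ => InB_ne M hp⟩
    have hc1 := walk_cons M hhead hw ht (Or.inr he1) htri1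
    have htri2 : ∀ w rest, (r :: W) = r :: w :: rest → ATri M q r w := by
      intro w rest hEq
      simp only [List.cons.injEq, true_and] at hEq
      rw [hEq] at hhead
      simp only [List.head?_cons, Option.some.injEq] at hhead
      subst hhead
      exact ⟨fun _ => ⟨r, ReflTransGen.refl, hrR⟩, fun hnc => absurd ⟨he2, he1⟩ hnc⟩
    have hc2 := walk_cons M (rfl : (r :: W).head? = some r) hc1.1 hc1.2.1 (Or.inl he2) htri2
    obtain ⟨u, hu, hl⟩ := hlast
    refine ⟨q :: r :: W, rfl, ⟨u, hu, ?_⟩, hc2.1, hc2.2.1, Or.inr ⟨r, W, rfl, Or.inl he2⟩⟩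
    rw [hc2.2.2, hc1.2.2]
    exact hl

lemma not_BAD : ¬ BAD M := by
  intro hbad
  obtain ⟨p0, hp0⟩ := hbad
  have hex : ∃ n, ∃ p, BadWalk M p ∧ p.length = n := ⟨p0.length, p0, hp0, rfl⟩
  classical
  obtain ⟨p, hp, hplen⟩ := Nat.find_spec hex
  obtain ⟨⟨Y, hYN, hYhead⟩, ⟨u, huU, hulast⟩, hne, hchain, htri⟩ := hp
  have hYD : M.Edge Y M.D := hYN.1
  have hds : DSep M.Edge {Y} {u | u ∈ (↑M.Util : Set V) ∧ ReflTransGen M.Edge M.D u}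
      {v | (M.Edge v M.D ∧ v ≠ Y) ∨ v = M.D} := by
    by_contra hc
    exact hYN.2 ⟨hYD, hc⟩
  have hblocks := hds p ⟨hne, hchain⟩ ⟨Y, rfl, hYhead⟩ ⟨u, huU, hulast⟩
  rcases hblocks with ⟨x, hx, hxS⟩ | ⟨x, hx, hxS⟩ | ⟨l, a, b, c, r, heq, hbl⟩
  · -- head in S
    rw [hYhead] at hx
    obtain rfl : Y = x := Option.some.inj hx
    rcases hxS with ⟨-, hne'⟩ | hd
    · exact hne' rfl
    · exact noself M (hd ▸ hYD)
  · -- last in S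
    rw [hulast] at hx
    obtain rfl : u = x := Option.some.inj hx
    rcases hxS with ⟨hed, -⟩ | hd
    · exact M.utilNoChild u huU.1 M.D hed
    · exact M.utilNotD (hd ▸ huU.1)
  · have hat := TriChain_decomp M htri heq
    rcases hbl with ⟨hab, hcb, hnodesc⟩ | ⟨hnc, hbS⟩
    · obtain ⟨w, hwr, hwR⟩ := hat.1 ⟨hab, hcb⟩
      exact hnodesc w hwr (Or.inl ⟨hwR.1, fun hwY => hYN.2 (hwY ▸ hwR)⟩)
    · obtain ⟨hbR, hbD⟩ := hat.2 hnc
      rcases hbS with ⟨hbd, -⟩ | hd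
      · -- b is a nonrequisite parent occurring as an interior non-collider:
        -- the strictly shorter suffix is a bad walk, contradicting minimality.
        have hsuffix : BadWalk M (b :: c :: r) := by
          refine ⟨⟨b, ⟨hbd, hbR⟩, rfl⟩, ⟨u, huU, ?_⟩, by simp, ?_, ?_⟩
          · rw [← hulast, heq]
            rw [show l ++ a :: b :: c :: r = (l ++ [a]) ++ b :: c :: r by simp]
            exact (List.getLast?_append_of_ne_nil _ (by simp)).symm
          · have : (l ++ [a]) ++ b :: c :: r = p := by rw [heq]; simp
            rw [← this] at hchain
            exact (List.isChain_append.1 hchain).2.1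
          · have : (l ++ [a]) ++ b :: c :: r = p := by rw [heq]; simp
            rw [← this] at htri
            exact TriChain_suffix M (l ++ [a]) htri
        have hlt : (b :: c :: r).length < p.length := by
          rw [heq]; simp only [List.length_append, List.length_cons]; omega
        rw [hplen] at hlt
        exact absurd (Nat.find_min' hex ⟨b :: c :: r, hsuffix, rfl⟩) (by omega)
      · exact hbD hd

lemma notCset {a : V} (h : a ∉ Cset M) : a ∉ Rset M ∧ a ≠ M.D := by
  constructor
  · intro hr; exact h (Or.inl hr)
  · intro hd; exact h (Or.inr hd)

lemma InB_of_FC_chain {v w : V} (h : ReflTransGen (FC M (Cset M)) v w) (hw : InB M w) :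
    InB M v := by
  induction h using Relation.ReflTransGen.head_induction_on with
  | refl => exact hw
  | head e h' ih =>
    exact InB.up _ _ ih e.1 (notCset M e.2.1).1 (notCset M e.2.1).2

lemma FC_le_E0 {a b : V} (h : FC M (Cset M) a b) : E0 M a b :=
  ⟨h.1, (notCset M h.2.1).2, (notCset M h.2.2).2⟩

lemma InB_down_chain {v w : V} (hwAn : w ∈ An M) (h : ReflTransGen (FC M (Cset M)) v w) :
    InB M v → InB M w := by
  induction h using Relation.ReflTransGen.head_induction_on with
  | refl => exact id
  | head e h' ih =>
    rename_i a b
    intro ha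
    refine ih (InB.down _ _ ha e.1 (notCset M e.2.2).1 (notCset M e.2.2).2 ?_)
    obtain ⟨t, htm, htr⟩ := hwAn
    exact ⟨t, htm, ReflTransGen.trans (ReflTransGen.mono (r := FC M (Cset M)) (p := E0 M) (fun x y hh => FC_le_E0 M hh) _ _ h') htr⟩

lemma InB_not_N {Y : V} (hY : Y ∈ Nset M) : ¬ InB M Y := by
  intro hv
  obtain ⟨p, hh, h2, h3, h4, h5⟩ := InB_good M (not_BAD M) Y hv
  obtain ⟨l', rfl⟩ := head_shape hh
  exact not_BAD M ⟨Y :: l', ⟨Y, hY, rfl⟩, h2, by simp, h3, h4⟩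

lemma notInB_of_chain_to_N {Y v : V} (hY : Y ∈ Nset M)
    (h : ReflTransGen (FC M (Cset M)) v Y) : ¬ InB M v := by
  intro hv
  have hYAn : Y ∈ An M := ⟨Y, Or.inl (Or.inl hY), ReflTransGen.refl⟩
  exact InB_not_N M hY (InB_down_chain M hYAn h hv)

lemma notInB_of_chain_to_left_parent {rr pp v : V} (hrR : rr ∈ Rset M) (hpr : M.Edge pp rr)
    (hleft : ∀ p', M.Edge p' rr → ¬ InB M p') (hpC : pp ∉ Cset M)
    (h : ReflTransGen (FC M (Cset M)) v pp) : ¬ InB M v := by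
  intro hv
  have hpAn : pp ∈ An M :=
    ⟨rr, Or.inr hrR, ReflTransGen.single ⟨hpr, (notCset M hpC).2, fun hd => D_notR M (hd ▸ hrR)⟩⟩
  exact hleft pp hpr (InB_down_chain M hpAn h hv)

end Graph

section Model

open Relation

variable {V : Type} [Fintype V] [DecidableEq V] (M : SCIM V)

lemma cycle_absurd {p : V} (h : ReflTransGen M.Edge M.D p) (h2 : M.Edge p M.D) : False :=
  M.acyclic M.D (Relation.TransGen.tail' h h2)

lemma Loc_f : Loc M M.f := M.localDep

lemma Loc_doSet {g} (hg : Loc M g) (X : Set V) (x : ∀ v, M.Dom v) :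
    Loc M (M.doSet g X x) := by
  intro v a a' e h
  unfold SCIM.doSet
  by_cases hv : v ∈ X
  · rw [if_pos hv]
  · rw [if_neg hv]; exact hg v a a' e h

lemma gpol_D (π) : M.gpol π M.D = π := by
  unfold SCIM.gpol SCIM.replaceAt
  rw [dif_pos rfl]

lemma gpol_ne (π) {v : V} (h : v ≠ M.D) : M.gpol π v = M.f v := by
  unfold SCIM.gpol SCIM.replaceAt
  rw [dif_neg h]

lemma Loc_gpol {π} (hπ : M.IsPolicy π) : Loc M (M.gpol π) := by
  intro v a a' e h
  by_cases hv : v = M.D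
  · subst hv
    rw [gpol_D]
    exact hπ a a' e h
  · rw [gpol_ne M π hv]
    exact M.localDep v a a' e h

/-- the hard intervention do(D := d) system -/
def gdo (d : M.Dom M.D) := M.doSet M.f {M.D} (Function.update M.dflt M.D d)

lemma Loc_gdo (d) : Loc M (gdo M d) := Loc_doSet M (Loc_f M) _ _

lemma gdo_D (d) (a e) : gdo M d M.D a e = d := by
  unfold gdo SCIM.doSet
  rw [if_pos (Set.mem_singleton M.D)]
  exact Function.update_self _ _ _

lemma gdo_ne (d) {v} (h : v ≠ M.D) : gdo M d v = M.f v := by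
  unfold gdo SCIM.doSet
  rw [if_neg (by simpa using h)]

/-- solutions at non-descendants of `D` don't depend on the mechanism at `D` -/
lemma sol_eq_off_D {g g'} (hg : Loc M g) (hg' : Loc M g')
    (hsame : ∀ v, v ≠ M.D → g v = g' v) (ε) (u : V)
    (hu : ¬ ReflTransGen M.Edge M.D u) :
    M.sol g ε u = M.sol g' ε u := by
  refine sol_congr M {M.D} g g' hg hg' (fun v hv => hsame v hv) u ?_ ε ε (fun _ _ _ => rfl) ?_
  · intro c hc v he hv hch
    exfalso
    rw [Set.mem_singleton_iff] at hc
    subst hc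
    exact hu (ReflTransGen.head he (ReflTransGen.mono (r := FC M {M.D}) (p := M.Edge) (fun x y hh => hh.1) _ _ hch))
  · intro hu'
    rw [Set.mem_singleton_iff] at hu'
    exact hu (hu' ▸ ReflTransGen.refl)

end Model

section Model2

open Relation

variable {V : Type} [Fintype V] [DecidableEq V] (M : SCIM V)

lemma parent_not_desc {p : V} (hp : M.Edge p M.D) : ¬ ReflTransGen M.Edge M.D p :=
  fun h => cycle_absurd M h hp

/-- parents of the decision have policy-independent values -/
lemma sol_parent (π) (hπ : M.IsPolicy π) (ε) {p : V} (hp : M.Edge p M.D) :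
    M.sol (M.gpol π) ε p = M.sol M.f ε p :=
  sol_eq_off_D M (Loc_gpol M hπ) (Loc_f M) (fun v hv => gpol_ne M π hv) ε p
    (parent_not_desc M hp)

/-- non-descendant utilities are policy-independent -/
lemma sol_nondesc (π) (hπ : M.IsPolicy π) (ε) {u : V} (hu : ¬ ReflTransGen M.Edge M.D u) :
    M.sol (M.gpol π) ε u = M.sol M.f ε u :=
  sol_eq_off_D M (Loc_gpol M hπ) (Loc_f M) (fun v hv => gpol_ne M π hv) ε u hu

/-- parents of the decision: `do`-model values agree with the base model -/
lemma sol_parent_gdo (d) (ε) {u : V} (hu : ¬ ReflTransGen M.Edge M.D u) :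
    M.sol (gdo M d) ε u = M.sol M.f ε u :=
  sol_eq_off_D M (Loc_gdo M d) (Loc_f M) (fun v hv => gdo_ne M d hv) ε u hu

/-- the policy model equals the do-model at the realized decision -/
lemma sol_gpol_eq_gdo (π) (hπ : M.IsPolicy π) (ε) :
    M.sol (M.gpol π) ε = M.sol (gdo M (M.sol (M.gpol π) ε M.D)) ε := by
  set d := M.sol (M.gpol π) ε M.D with hd
  refine (sol_eq_of_solves M (Loc_gdo M d) ?_).symm
  intro v
  by_cases hv : v = M.D
  · subst hv
    rw [gdo_D]
  · rw [gdo_ne M d hv, ← gpol_ne M π hv]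
    exact sol_solves M _ (Loc_gpol M hπ) ε v

/-- decision value taken by a policy -/
lemma gpol_D_val (π) (hπ : M.IsPolicy π) (ε) :
    M.sol (M.gpol π) ε M.D = π (M.sol M.f ε) (ε M.D) := by
  have h1 := sol_solves M _ (Loc_gpol M hπ) ε M.D
  rw [h1]
  have h2 : M.gpol π M.D = π := gpol_D M π
  rw [h2]
  exact hπ _ _ _ (fun p hp => sol_parent M π hπ ε hp)

/-- parent assignments -/
def PaAsn := ∀ p : {v // M.Edge v M.D}, M.Dom p.1

/-- requisite assignments -/
def RAsn := ∀ r : {v // v ∈ Rset M}, M.Dom r.1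

instance : Fintype (PaAsn M) := by
  unfold PaAsn
  letI := M.domFin
  infer_instance

instance : Fintype (RAsn M) := by
  unfold RAsn
  letI := M.domFin
  infer_instance

def ctx (ε : ∀ v, M.ExoDom v) : PaAsn M := fun p => M.sol M.f ε p.1

def restr (ρ : PaAsn M) : RAsn M := fun r => ρ ⟨r.1, r.2.1⟩

def extP (ρ : PaAsn M) : ∀ v, M.Dom v :=
  fun v => if h : M.Edge v M.D then ρ ⟨v, h⟩ else M.dflt v

def extR (σ : RAsn M) : PaAsn M := fun p => if h : (p : V) ∈ Rset M then σ ⟨p.1, h⟩ else M.dflt p.1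

/-- the clamp values -/
def xcl (ρ : PaAsn M) (d : M.Dom M.D) : ∀ v, M.Dom v :=
  fun v => if h : M.Edge v M.D then ρ ⟨v, h⟩
    else if h2 : v = M.D then (h2.symm ▸ d : M.Dom v) else M.dflt v

/-- the clamped system -/
def gcl (ρ : PaAsn M) (d : M.Dom M.D) := M.doSet M.f (Cset M) (xcl M ρ d)

lemma Loc_gcl (ρ d) : Loc M (gcl M ρ d) := Loc_doSet M (Loc_f M) _ _

lemma D_not_parent : ¬ M.Edge M.D M.D := noself M

lemma xcl_D (ρ d) : xcl M ρ d M.D = d := by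
  unfold xcl
  rw [dif_neg (D_not_parent M), dif_pos rfl]

lemma xcl_R (ρ d) {r : V} (hr : r ∈ Rset M) : xcl M ρ d r = ρ ⟨r, hr.1⟩ := by
  unfold xcl
  rw [dif_pos hr.1]

lemma gcl_mem (ρ d) {v : V} (hv : v ∈ Cset M) (a e) : gcl M ρ d v a e = xcl M ρ d v := by
  unfold gcl SCIM.doSet
  rw [if_pos hv]

lemma gcl_not_mem (ρ d) {v : V} (hv : v ∉ Cset M) : gcl M ρ d v = M.f v := by
  unfold gcl SCIM.doSet
  rw [if_neg hv]

lemma sol_gcl_C (ρ d) (ε) {v : V} (hv : v ∈ Cset M) :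
    M.sol (gcl M ρ d) ε v = xcl M ρ d v := by
  rw [sol_solves M _ (Loc_gcl M ρ d) ε v, gcl_mem M ρ d hv]

/-- the conditional factor at a requisite parent -/
def phi (ρ : PaAsn M) (d : M.Dom M.D) (r : V) (ε : ∀ v, M.ExoDom v) : M.Dom r :=
  M.f r (M.sol (gcl M ρ d) ε) (ε r)

lemma D_in_C : M.D ∈ Cset M := Or.inr rfl

lemma R_in_C {r : V} (hr : r ∈ Rset M) : r ∈ Cset M := Or.inl hr

/-- Event rewriting: assuming the parent context event, the do-model solution
coincides with the clamped-model solution. -/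
lemma sol_gdo_eq_gcl (ρ d ε) (hev : ∀ (p : V) (hp : M.Edge p M.D), M.sol (gdo M d) ε p = ρ ⟨p, hp⟩) :
    M.sol (gdo M d) ε = M.sol (gcl M ρ d) ε := by
  refine (solves_unique M (Loc_gcl M ρ d) ?_ (sol_solves M _ (Loc_gcl M ρ d) ε))
  intro v
  by_cases hv : v ∈ Cset M
  · rw [gcl_mem M ρ d hv]
    rcases hv with hvR | hvD
    · rw [xcl_R M ρ d hvR]
      exact hev v hvR.1
    · rw [Set.mem_singleton_iff] at hvD
      subst hvD
      rw [xcl_D]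
      rw [sol_solves M _ (Loc_gdo M d) ε M.D, gdo_D]
  · rw [gcl_not_mem M ρ d hv]
    have hvD : v ≠ M.D := fun h => hv (Or.inr h)
    rw [← gdo_ne M d hvD]
    exact sol_solves M _ (Loc_gdo M d) ε v

/-- Event rewriting, converse direction. -/
lemma sol_gdo_eq_gcl' (ρ d ε)
    (hR : ∀ (r : V) (hr : r ∈ Rset M), phi M ρ d r ε = ρ ⟨r, hr.1⟩) :
    M.sol (gdo M d) ε = M.sol (gcl M ρ d) ε := by
  refine sol_eq_of_solves M (Loc_gdo M d) ?_
  intro v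
  by_cases hvD : v = M.D
  · subst hvD
    rw [gdo_D, sol_gcl_C M ρ d ε (D_in_C M), xcl_D]
  · rw [gdo_ne M d hvD]
    by_cases hvR : v ∈ Rset M
    · rw [sol_gcl_C M ρ d ε (R_in_C M hvR)]
      rw [xcl_R M ρ d hvR]
      exact (hR v hvR).symm
    · have hvC : v ∉ Cset M := fun h => h.elim hvR (fun h2 => hvD h2)
      rw [← gcl_not_mem M ρ d hvC]
      exact sol_solves M _ (Loc_gcl M ρ d) ε v

/-- The context event in terms of the base model equals that of the do-model. -/
lemma ctx_eq_gdo (d ε) (p : V) (hp : M.Edge p M.D) :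
    M.sol M.f ε p = M.sol (gdo M d) ε p :=
  (sol_parent_gdo M d ε (parent_not_desc M hp)).symm

/-- Full event characterization. -/
lemma event_iff (ρ d ε) :
    (ctx M ε = ρ) ↔
      ((∀ (r : V) (hr : r ∈ Rset M), phi M ρ d r ε = ρ ⟨r, hr.1⟩) ∧
       (∀ (Y : V) (hY : Y ∈ Nset M), M.sol (gcl M ρ d) ε Y = ρ ⟨Y, hY.1⟩)) := by
  constructor
  · intro hev
    have hev' : ∀ (p : V) (hp : M.Edge p M.D), M.sol (gdo M d) ε p = ρ ⟨p, hp⟩ := by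
      intro p hp
      rw [← ctx_eq_gdo M d ε p hp]
      exact congrFun hev ⟨p, hp⟩
    have hsol := sol_gdo_eq_gcl M ρ d ε hev'
    constructor
    · intro r hr
      have h1 : M.sol (gdo M d) ε r = phi M ρ d r ε := by
        rw [sol_solves M _ (Loc_gdo M d) ε r, gdo_ne M d (fun h => D_notR M (h ▸ hr)), hsol]
        rfl
      rw [← h1]
      exact hev' r hr.1
    · intro Y hY
      rw [← hsol]
      exact hev' Y hY.1
  · rintro ⟨hR, hN⟩
    have hsol := sol_gdo_eq_gcl' M ρ d ε hR
    funext p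
    have hp : M.Edge p.1 M.D := p.2
    rw [show (ctx M ε p) = M.sol M.f ε p.1 from rfl, ctx_eq_gdo M d ε p.1 hp, hsol]
    by_cases hpR : p.1 ∈ Rset M
    · rw [sol_gcl_C M ρ d ε (R_in_C M hpR), xcl_R M ρ d hpR]
    · have := hN p.1 ⟨hp, hpR⟩
      rw [this]

end Model2

section Model3

open Relation

variable {V : Type} [Fintype V] [DecidableEq V] (M : SCIM V)

def ind (P : Prop) : ℝ := if P then 1 else 0

omit [Fintype V] [DecidableEq V] in
lemma ind_nonneg {P : Prop} : 0 ≤ ind P := by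
  unfold ind; split <;> norm_num

omit [Fintype V] [DecidableEq V] in
lemma ind_pos {P : Prop} (h : P) : ind P = 1 := if_pos h

omit [Fintype V] [DecidableEq V] in
lemma ind_neg {P : Prop} (h : ¬ P) : ind P = 0 := if_neg h

omit [Fintype V] [DecidableEq V] in
lemma ind_congr {P Q : Prop} (h : P ↔ Q) : ind P = ind Q := by
  by_cases hp : P
  · rw [ind_pos hp, ind_pos (h.1 hp)]
  · rw [ind_neg hp, ind_neg (fun hq => hp (h.2 hq))]

def Rright (r : V) : Prop := ∃ p, M.Edge p r ∧ InB M p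

/-- left-hand coordinates -/
def CLs : Set V := {v | v ∉ Cset M ∧ ¬ InB M v} ∪ {r | r ∈ Rset M ∧ ¬ Rright M r}

/-- right-hand coordinates -/
def CRs : Set V := {v | InB M v} ∪ {r | r ∈ Rset M ∧ Rright M r}

lemma CL_CR_disjoint : ∀ v, v ∈ CLs M → v ∈ CRs M → False := by
  rintro v (⟨hvC, hvB⟩ | ⟨hvR, hvr⟩) (hB | ⟨hR2, hr2⟩)
  · exact hvB hB
  · exact hvC (Or.inl hR2)
  · exact (InB_ne M hB).1 hvR
  · exact hvr hr2

lemma D_not_CL : M.D ∉ CLs M := by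
  rintro (⟨hvC, -⟩ | ⟨hvR, -⟩)
  · exact hvC (Or.inr rfl)
  · exact D_notR M hvR

lemma D_not_CR : M.D ∉ CRs M := by
  rintro (hB | ⟨hR2, -⟩)
  · exact (InB_ne M hB).2 rfl
  · exact D_notR M hR2

/-- generic ε-dependence of clamped solutions -/
lemma sol_gcl_dep (ρ d) (ε ε' : ∀ v, M.ExoDom v) (u : V) (hu : u ∉ Cset M)
    (hε : ∀ v, v ∉ Cset M → ReflTransGen (FC M (Cset M)) v u → ε v = ε' v) :
    M.sol (gcl M ρ d) ε u = M.sol (gcl M ρ d) ε' u := by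
  refine sol_congr M (Cset M) _ _ (Loc_gcl M ρ d) (Loc_gcl M ρ d) (fun v hv => rfl) u
    ?_ ε ε' hε hu
  intro c hc v _ _ _
  exact ⟨xcl M ρ d c, fun a e => gcl_mem M ρ d hc a e, fun a e => gcl_mem M ρ d hc a e⟩

/-- d-independence of clamped solutions away from descendants of D -/
lemma sol_gcl_dep_d (ρ d d') (ε : ∀ v, M.ExoDom v) (u : V) (hu : u ∉ Cset M)
    (hD : ¬ ReflTransGen M.Edge M.D u) :
    M.sol (gcl M ρ d) ε u = M.sol (gcl M ρ d') ε u := by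
  refine sol_congr M (Cset M) _ _ (Loc_gcl M ρ d) (Loc_gcl M ρ d')
    (fun v hv => by rw [gcl_not_mem M ρ d hv, gcl_not_mem M ρ d' hv]) u ?_ ε ε
    (fun _ _ _ => rfl) hu
  intro c hc v hcv hvC hch
  rcases hc with hcR | hcD
  · exact ⟨ρ ⟨c, hcR.1⟩, fun a e => by rw [gcl_mem M ρ d (Or.inl hcR) a e, xcl_R M ρ d hcR],
      fun a e => by rw [gcl_mem M ρ d' (Or.inl hcR) a e, xcl_R M ρ d' hcR]⟩
  · exfalso
    rw [Set.mem_singleton_iff] at hcD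
    subst hcD
    exact hD (ReflTransGen.head hcv (ReflTransGen.mono (r := FC M (Cset M)) (p := M.Edge) (fun x y hh => hh.1) _ _ hch))

lemma sol_in_B_dep (ρ d) {u : V} (hu : InB M u) (ε ε')
    (hε : ∀ v ∈ CRs M, ε v = ε' v) :
    M.sol (gcl M ρ d) ε u = M.sol (gcl M ρ d) ε' u := by
  refine sol_gcl_dep M ρ d ε ε' u ?_ ?_
  · intro hC
    rcases hC with hR | hD
    · exact (InB_ne M hu).1 hR
    · exact (InB_ne M hu).2 hD
  · intro v hvC hch
    exact hε v (Or.inl (InB_of_FC_chain M hch hu))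

lemma sol_N_dep (ρ d) {Y : V} (hY : Y ∈ Nset M) (ε ε')
    (hε : ∀ v ∈ CLs M, ε v = ε' v) :
    M.sol (gcl M ρ d) ε Y = M.sol (gcl M ρ d) ε' Y := by
  refine sol_gcl_dep M ρ d ε ε' Y ?_ ?_
  · intro hC
    rcases hC with hR | hD
    · exact hY.2 hR
    · exact noself M (hD ▸ hY.1)
  · intro v hvC hch
    exact hε v (Or.inl ⟨hvC, notInB_of_chain_to_N M hY hch⟩)

lemma phi_right_dep (ρ d) {r : V} (hr : r ∈ Rset M) (hright : Rright M r) (ε ε')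
    (hε : ∀ v ∈ CRs M, ε v = ε' v) :
    phi M ρ d r ε = phi M ρ d r ε' := by
  unfold phi
  rw [hε r (Or.inr ⟨hr, hright⟩)]
  refine M.localDep r _ _ (ε' r) ?_
  intro p hpr
  by_cases hpC : p ∈ Cset M
  · rw [sol_gcl_C M ρ d ε hpC, sol_gcl_C M ρ d ε' hpC]
  · obtain ⟨p0, hp0e, hp0B⟩ := hright
    have hpB : InB M p := by
      by_cases hpp : p = p0
      · exact hpp ▸ hp0B
      · exact InB.moral p0 r p hp0B hp0e hr hpr (fun h => hpC (Or.inl h))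
          (fun h => hpC (Or.inr h))
    refine sol_gcl_dep M ρ d ε ε' p hpC ?_
    intro v hvC hch
    exact hε v (Or.inl (InB_of_FC_chain M hch hpB))

lemma phi_left_dep (ρ d) {r : V} (hr : r ∈ Rset M) (hleft : ¬ Rright M r) (ε ε')
    (hε : ∀ v ∈ CLs M, ε v = ε' v) :
    phi M ρ d r ε = phi M ρ d r ε' := by
  unfold phi
  rw [hε r (Or.inr ⟨hr, hleft⟩)]
  refine M.localDep r _ _ (ε' r) ?_
  intro p hpr
  by_cases hpC : p ∈ Cset M
  · rw [sol_gcl_C M ρ d ε hpC, sol_gcl_C M ρ d ε' hpC]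
  · refine sol_gcl_dep M ρ d ε ε' p hpC ?_
    intro v hvC hch
    refine hε v (Or.inl ⟨hvC, ?_⟩)
    exact notInB_of_chain_to_left_parent M hr hpr
      (fun p' hp' hB => hleft ⟨p', hp', hB⟩) hpC hch

/-- d-independence of the left-hand quantities -/
lemma sol_N_dep_d (ρ d d') {Y : V} (hY : Y ∈ Nset M) (ε) :
    M.sol (gcl M ρ d) ε Y = M.sol (gcl M ρ d') ε Y := by
  refine sol_gcl_dep_d M ρ d d' ε Y ?_ (parent_not_desc M hY.1)
  intro hC
  rcases hC with hR | hD
  · exact hY.2 hR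
  · exact noself M (hD ▸ hY.1)

lemma phi_left_dep_d (ρ d d') {r : V} (hr : r ∈ Rset M) (ε) :
    phi M ρ d r ε = phi M ρ d' r ε := by
  unfold phi
  refine M.localDep r _ _ (ε r) ?_
  intro p hpr
  have hrd : M.Edge r M.D := hr.1
  by_cases hpC : p ∈ Cset M
  · rcases hpC with hpR | hpD
    · rw [sol_gcl_C M ρ d ε (Or.inl hpR), sol_gcl_C M ρ d' ε (Or.inl hpR),
        xcl_R M ρ d hpR, xcl_R M ρ d' hpR]
    · exfalso
      rw [Set.mem_singleton_iff] at hpD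
      subst hpD
      exact M.acyclic M.D (TransGen.head hpr (TransGen.single hrd))
  · refine sol_gcl_dep_d M ρ d d' ε p hpC ?_
    intro hreach
    exact cycle_absurd M (hreach.tail hpr) hrd

end Model3

section Model4

open Relation

variable {V : Type} [Fintype V] [DecidableEq V] (M : SCIM V)

def hdown (d : M.Dom M.D) (ε : ∀ v, M.ExoDom v) : ℝ :=
  ∑ u ∈ M.Util, if ReflTransGen M.Edge M.D u then M.utilReal u (M.sol (gdo M d) ε u) else 0

def htil (ρ : PaAsn M) (d : M.Dom M.D) (ε : ∀ v, M.ExoDom v) : ℝ :=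
  ∑ u ∈ M.Util, if ReflTransGen M.Edge M.D u then M.utilReal u (M.sol (gcl M ρ d) ε u) else 0

def PL (ρ : PaAsn M) (d : M.Dom M.D) (ε : ∀ v, M.ExoDom v) : Prop :=
  (∀ (r : V) (hr : r ∈ Rset M), ¬ Rright M r → phi M ρ d r ε = ρ ⟨r, hr.1⟩) ∧
  (∀ (Y : V) (hY : Y ∈ Nset M), M.sol (gcl M ρ d) ε Y = ρ ⟨Y, hY.1⟩)

def PR (ρ : PaAsn M) (d : M.Dom M.D) (ε : ∀ v, M.ExoDom v) : Prop :=
  ∀ (r : V) (hr : r ∈ Rset M), Rright M r → phi M ρ d r ε = ρ ⟨r, hr.1⟩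

def FL (ρ : PaAsn M) (d : M.Dom M.D) (ε : ∀ v, M.ExoDom v) : ℝ := ind (PL M ρ d ε)

def FR (ρ : PaAsn M) (d : M.Dom M.D) (ε : ∀ v, M.ExoDom v) : ℝ :=
  ind (PR M ρ d ε) * htil M ρ d ε

lemma FL_dep (ρ d) (ε ε') (hε : ∀ v ∈ CLs M, ε v = ε' v) :
    FL M ρ d ε = FL M ρ d ε' := by
  refine ind_congr ?_
  unfold PL
  constructor
  · rintro ⟨h1, h2⟩
    refine ⟨fun r hr hl => ?_, fun Y hY => ?_⟩
    · rw [← phi_left_dep M ρ d hr hl ε ε' hε]; exact h1 r hr hl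
    · rw [← sol_N_dep M ρ d hY ε ε' hε]; exact h2 Y hY
  · rintro ⟨h1, h2⟩
    refine ⟨fun r hr hl => ?_, fun Y hY => ?_⟩
    · rw [phi_left_dep M ρ d hr hl ε ε' hε]; exact h1 r hr hl
    · rw [sol_N_dep M ρ d hY ε ε' hε]; exact h2 Y hY

lemma FR_dep (ρ d) (ε ε') (hε : ∀ v ∈ CRs M, ε v = ε' v) :
    FR M ρ d ε = FR M ρ d ε' := by
  unfold FR
  have h1 : htil M ρ d ε = htil M ρ d ε' := by
    refine Finset.sum_congr rfl (fun u hu => ?_)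
    by_cases hd : ReflTransGen M.Edge M.D u
    · rw [if_pos hd, if_pos hd,
        sol_in_B_dep M ρ d (InB.base u ⟨hu, hd⟩) ε ε' hε]
    · rw [if_neg hd, if_neg hd]
  have h2 : PR M ρ d ε ↔ PR M ρ d ε' := by
    unfold PR
    constructor
    · intro h r hr hrr
      rw [← phi_right_dep M ρ d hr hrr ε ε' hε]; exact h r hr hrr
    · intro h r hr hrr
      rw [phi_right_dep M ρ d hr hrr ε ε' hε]; exact h r hr hrr
  rw [h1, ind_congr h2]

lemma FL_d (ρ d d') (ε) : FL M ρ d ε = FL M ρ d' ε := by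
  refine ind_congr ?_
  unfold PL
  constructor
  · rintro ⟨h1, h2⟩
    exact ⟨fun r hr hl => by rw [← phi_left_dep_d M ρ d d' hr ε]; exact h1 r hr hl,
      fun Y hY => by rw [← sol_N_dep_d M ρ d d' hY ε]; exact h2 Y hY⟩
  · rintro ⟨h1, h2⟩
    exact ⟨fun r hr hl => by rw [phi_left_dep_d M ρ d d' hr ε]; exact h1 r hr hl,
      fun Y hY => by rw [sol_N_dep_d M ρ d d' hY ε]; exact h2 Y hY⟩

lemma gcl_restr (ρ : PaAsn M) (d) : gcl M ρ d = gcl M (extR M (restr M ρ)) d := by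
  funext v
  by_cases hv : v ∈ Cset M
  · funext a e
    rw [gcl_mem M ρ d hv, gcl_mem M _ d hv]
    rcases hv with hvR | hvD
    · rw [xcl_R M ρ d hvR, xcl_R M _ d hvR]
      unfold extR
      rw [dif_pos hvR]
      rfl
    · rw [Set.mem_singleton_iff] at hvD
      subst hvD
      rw [xcl_D, xcl_D]
  · rw [gcl_not_mem M ρ d hv, gcl_not_mem M _ d hv]

lemma extR_restr_val (ρ : PaAsn M) {r : V} (hr : r ∈ Rset M) :
    extR M (restr M ρ) ⟨r, hr.1⟩ = ρ ⟨r, hr.1⟩ := by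
  unfold extR
  rw [dif_pos hr]
  rfl

lemma FR_restrict (ρ : PaAsn M) (d) (ε) :
    FR M ρ d ε = FR M (extR M (restr M ρ)) d ε := by
  unfold FR htil PR phi
  rw [gcl_restr M ρ d]
  congr 1
  refine ind_congr ?_
  constructor
  · intro h r hr hrr
    rw [extR_restr_val M ρ hr]
    exact h r hr hrr
  · intro h r hr hrr
    rw [← extR_restr_val M ρ hr]
    exact h r hr hrr

/-- the pointwise factorization of the context-event indicator times downstream utility -/
lemma pointwise_fact (ρ d ε) :
    ind (ctx M ε = ρ) * hdown M d ε = FL M ρ d ε * FR M ρ d ε := by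
  by_cases hev : ctx M ε = ρ
  · obtain ⟨hR, hN⟩ := (event_iff M ρ d ε).1 hev
    have hsol := sol_gdo_eq_gcl' M ρ d ε hR
    have hdh : hdown M d ε = htil M ρ d ε := by
      unfold hdown htil
      rw [hsol]
    rw [ind_pos hev, hdh]
    unfold FL FR
    have hPL : PL M ρ d ε := ⟨fun r hr _ => hR r hr, hN⟩
    have hPR : PR M ρ d ε := fun r hr _ => hR r hr
    rw [ind_pos hPL, ind_pos hPR]
    ring
  · rw [ind_neg hev]
    unfold FL FR
    by_cases hPL : PL M ρ d ε
    · by_cases hPR : PR M ρ d ε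
      · exfalso
        refine hev ((event_iff M ρ d ε).2 ⟨fun r hr => ?_, hPL.2⟩)
        by_cases hrr : Rright M r
        · exact hPR r hr hrr
        · exact hPL.1 r hr hrr
      · rw [ind_neg hPR]
        ring
    · rw [ind_neg hPL]
      ring

def pDe (e : M.ExoDom M.D) : ℝ := ∑ ε ∈ M.exoElems, M.Pjoint ε * ind (ε M.D = e)

def WL (ρ : PaAsn M) : ℝ := ∑ ε ∈ M.exoElems, M.Pjoint ε * FL M ρ (M.dflt M.D) ε

def WR (σ : RAsn M) (d : M.Dom M.D) : ℝ :=
  ∑ ε ∈ M.exoElems, M.Pjoint ε * FR M (extR M σ) d ε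

lemma pDe_nonneg (e) : 0 ≤ pDe M e :=
  Finset.sum_nonneg (fun ε _ => mul_nonneg (Pjoint_nonneg M ε) ind_nonneg)

lemma WL_nonneg (ρ) : 0 ≤ WL M ρ :=
  Finset.sum_nonneg (fun ε _ => mul_nonneg (Pjoint_nonneg M ε) ind_nonneg)

/-- THE key factorization -/
lemma Wkey (ρ : PaAsn M) (d : M.Dom M.D) (e : M.ExoDom M.D) :
    (∑ ε ∈ M.exoElems, M.Pjoint ε * (ind (ctx M ε = ρ) * (ind (ε M.D = e) * hdown M d ε))) =
      pDe M e * (WL M ρ * WR M (restr M ρ) d) := by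
  have step0 : (∑ ε ∈ M.exoElems, M.Pjoint ε * (ind (ctx M ε = ρ) * (ind (ε M.D = e) * hdown M d ε))) =
      ∑ ε ∈ M.exoElems, M.Pjoint ε * (ind (ε M.D = e) * (FL M ρ d ε * FR M ρ d ε)) := by
    refine Finset.sum_congr rfl (fun ε _ => ?_)
    rw [← pointwise_fact M ρ d ε]
    ring
  rw [step0]
  have hFLdep : ∀ ε ε' : (∀ v, M.ExoDom v), (∀ v, ¬ (v = M.D) → ε v = ε' v) →
      FL M ρ d ε * FR M ρ d ε = FL M ρ d ε' * FR M ρ d ε' := by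
    intro ε ε' h
    rw [FL_dep M ρ d ε ε' (fun v hv => h v (fun hd => D_not_CL M (hd ▸ hv))),
      FR_dep M ρ d ε ε' (fun v hv => h v (fun hd => D_not_CR M (hd ▸ hv)))]
  have step1 := split M (fun v => v = M.D) (fun ε => ind (ε M.D = e))
    (fun ε => FL M ρ d ε * FR M ρ d ε)
    (fun ε ε' h => ind_congr (by rw [h M.D rfl])) hFLdep
  rw [step1]
  have step2 := split M (fun v => v ∈ CLs M) (fun ε => FL M ρ d ε) (fun ε => FR M ρ d ε)
    (fun ε ε' h => FL_dep M ρ d ε ε' h)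
    (fun ε ε' h => FR_dep M ρ d ε ε' (fun v hv => h v (fun hL => CL_CR_disjoint M v hL hv)))
  rw [step2]
  have e1 : (∑ ε ∈ M.exoElems, M.Pjoint ε * FL M ρ d ε) = WL M ρ := by
    unfold WL
    exact Finset.sum_congr rfl (fun ε _ => by rw [FL_d M ρ d (M.dflt M.D) ε])
  have e2 : (∑ ε ∈ M.exoElems, M.Pjoint ε * FR M ρ d ε) = WR M (restr M ρ) d := by
    unfold WR
    exact Finset.sum_congr rfl (fun ε _ => by rw [FR_restrict M ρ d ε])
  rw [e1, e2]
  rfl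

end Model4

section Final

open Relation

variable {V : Type} [Fintype V] [DecidableEq V] (M : SCIM V)

def K0 (ε : ∀ v, M.ExoDom v) : ℝ :=
  ∑ u ∈ M.Util, if ReflTransGen M.Edge M.D u then 0 else M.utilReal u (M.sol M.f ε u)

lemma TotalU_decomp (π) (hπ : M.IsPolicy π) (ε) :
    M.TotalU (M.sol (M.gpol π) ε) = K0 M ε + hdown M (π (M.sol M.f ε) (ε M.D)) ε := by
  unfold SCIM.TotalU K0 hdown
  rw [← Finset.sum_add_distrib]
  refine Finset.sum_congr rfl (fun u hu => ?_)
  by_cases hd : ReflTransGen M.Edge M.D u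
  · rw [if_pos hd, if_pos hd, zero_add]
    have h1 := sol_gpol_eq_gdo M π hπ ε
    have h2 := gpol_D_val M π hπ ε
    rw [h1, h2]
  · rw [if_neg hd, if_neg hd, add_zero, sol_nondesc M π hπ ε hd]

def Qp (π : ((p : V) → M.Dom p) → M.ExoDom M.D → M.Dom M.D) (ρ : PaAsn M)
    (e : M.ExoDom M.D) : M.Dom M.D := π (extP M ρ) e

lemma Q_at_ctx (π) (hπ : M.IsPolicy π) (ε) :
    Qp M π (ctx M ε) (ε M.D) = π (M.sol M.f ε) (ε M.D) := by
  refine hπ _ _ _ (fun p hp => ?_)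
  unfold extP
  rw [dif_pos hp]
  rfl

lemma collapse (X : PaAsn M → M.ExoDom M.D → ℝ) (ε : ∀ v, M.ExoDom v) :
    (letI := M.exoFin M.D;
      ∑ ρ : PaAsn M, ∑ e : M.ExoDom M.D, ind (ctx M ε = ρ) * (ind (ε M.D = e) * X ρ e)) =
      X (ctx M ε) (ε M.D) := by
  letI := M.exoFin M.D
  rw [Finset.sum_eq_single_of_mem (ctx M ε) (Finset.mem_univ _) ?side1]
  case side1 =>
    intro ρ _ hρ
    refine Finset.sum_eq_zero (fun e _ => ?_)
    rw [ind_neg (fun h => hρ h.symm), zero_mul]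
  rw [Finset.sum_eq_single_of_mem (ε M.D) (Finset.mem_univ _) ?side2]
  case side2 =>
    intro e _ he
    rw [show ind (ε M.D = e) = 0 from ind_neg (fun h => he h.symm), zero_mul, mul_zero]
  rw [ind_pos rfl, ind_pos rfl]
  ring

def SecondTerm (Q : PaAsn M → M.ExoDom M.D → M.Dom M.D) : ℝ :=
  letI := M.exoFin M.D
  ∑ ρ : PaAsn M, ∑ e : M.ExoDom M.D, pDe M e * (WL M ρ * WR M (restr M ρ) (Q ρ e))

lemma EU_formula (π) (hπ : M.IsPolicy π) :
    M.EU π = (∑ ε ∈ M.exoElems, M.Pjoint ε * K0 M ε) + SecondTerm M (Qp M π) := by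
  letI := M.exoFin M.D
  have h0 : M.EU π = ∑ ε ∈ M.exoElems, M.Pjoint ε * M.TotalU (M.sol (M.gpol π) ε) := rfl
  rw [h0]
  have h1 : ∀ ε, M.Pjoint ε * M.TotalU (M.sol (M.gpol π) ε) =
      M.Pjoint ε * K0 M ε +
        ∑ ρ : PaAsn M, ∑ e : M.ExoDom M.D,
          M.Pjoint ε * (ind (ctx M ε = ρ) * (ind (ε M.D = e) * hdown M (Qp M π ρ e) ε)) := by
    intro ε
    rw [TotalU_decomp M π hπ ε, mul_add]
    congr 1
    have h2 := collapse M (fun ρ e => hdown M (Qp M π ρ e) ε) ε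
    rw [Q_at_ctx M π hπ ε] at h2
    rw [← h2, Finset.mul_sum]
    exact Finset.sum_congr rfl (fun ρ _ => by rw [Finset.mul_sum])
  rw [Finset.sum_congr rfl (fun ε _ => h1 ε), Finset.sum_add_distrib]
  congr 1
  rw [Finset.sum_comm]
  unfold SecondTerm
  refine Finset.sum_congr rfl (fun ρ _ => ?_)
  rw [Finset.sum_comm]
  refine Finset.sum_congr rfl (fun e _ => ?_)
  exact Wkey M ρ (Qp M π ρ e) e

def dstar (σ : RAsn M) : M.Dom M.D := by
  classical
  letI := M.domFin M.D
  haveI := M.domNE M.D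
  exact (Finset.exists_max_image Finset.univ (WR M σ) Finset.univ_nonempty).choose

lemma dstar_spec (σ : RAsn M) (d : M.Dom M.D) : WR M σ d ≤ WR M σ (dstar M σ) := by
  classical
  letI := M.domFin M.D
  haveI := M.domNE M.D
  have h := (Finset.exists_max_image Finset.univ (WR M σ) Finset.univ_nonempty).choose_spec
  exact h.2 d (Finset.mem_univ d)

def pistar : ((p : V) → M.Dom p) → M.ExoDom M.D → M.Dom M.D :=
  fun a _ => dstar M (fun r => a r.1)

lemma pistar_policy : M.IsPolicy (pistar M) := by
  intro a a' e h
  unfold pistar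
  congr 1
  funext r
  exact h r.1 r.2.1

lemma Qp_pistar (ρ : PaAsn M) (e) : Qp M (pistar M) ρ e = dstar M (restr M ρ) := by
  unfold Qp pistar
  congr 1
  funext r
  unfold extP
  rw [dif_pos r.2.1]
  rfl

lemma pistar_optimal : M.IsOptimal (pistar M) := by
  refine ⟨pistar_policy M, fun π' hπ' => ?_⟩
  rw [EU_formula M π' hπ', EU_formula M (pistar M) (pistar_policy M)]
  refine add_le_add (le_refl _) ?_
  unfold SecondTerm
  letI := M.exoFin M.D
  refine Finset.sum_le_sum (fun ρ _ => Finset.sum_le_sum (fun e _ => ?_))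
  rw [Qp_pistar M ρ e]
  refine mul_le_mul_of_nonneg_left ?_ (pDe_nonneg M e)
  exact mul_le_mul_of_nonneg_left (dstar_spec M (restr M ρ) (Qp M π' ρ e)) (WL_nonneg M ρ)

end Final
/-- existence of a minimal-reduction-respecting optimal policy:
every single-decision SCIM has an optimal policy that depends only on its
requisite observations, i.e. whose value is unchanged whenever the two input
assignments agree on all requisite parents of the decision. -/
theorem exists_reduced_optimal_policy {V : Type} [Fintype V] [DecidableEq V]
    (M : SCIM V) :
    ∃ π, M.IsOptimal π ∧
      ∀ a a' e, (∀ p, RequisiteG M.Edge M.D (↑M.Util) p → a p = a' p) →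
        π a e = π a' e := by
  refine ⟨pistar M, pistar_optimal M, ?_⟩
  intro a a' e h
  unfold pistar
  congr 1
  funext r
  exact h r.1 r.2
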